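/- Γ_p of a box: for real sequences a_i ≤ b_i (i = 1,…,d) and p ∈ [2,∞), Γ_p([a₁,b₁] × ⋯ × [a_d,b_d]) equals (1/2)·‖b − a‖_q where q = 2p/(p+2); for p = ∞, it equals (1/2)·‖b − a‖₂. In particular, Γ_p([a,b]^d) = d^{1/2 + 1/p}(b − a)/2 for p ∈ [2,∞). -/

import Mathlib

open scoped ENNReal
open MeasureTheory ProbabilityTheory Matrix Set Bornology

/-- The `ℓ_p` norm of a finite-dimensional real vector, `p ∈ [1,∞]`. -/
noncomputable def pnorm (p : ℝ≥0∞) {ι : Type*} [Fintype ι] (x : ι → ℝ) : ℝ :=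
  if p = ∞ then ⨆ i, |x i| else (∑ i, |x i| ^ p.toReal) ^ (1 / p.toReal)

/-- `tr_p M`: the `ℓ_p` norm of the diagonal of a square matrix. -/
noncomputable def trp (p : ℝ≥0∞) {ι : Type*} [Fintype ι] (M : Matrix ι ι ℝ) : ℝ :=
  pnorm p (fun i => M i i)

/-- The closed Euclidean unit ball. -/
def ball2 (ι : Type*) [Fintype ι] : Set (ι → ℝ) := {x | ∑ i, (x i) ^ 2 ≤ 1}

/-- `Γ_p(K) = inf { sqrt(tr_{p/2}(A Aᵀ)) : ∃ v, K + v ⊆ A · B₂ }`. -/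
noncomputable def Gamma (p : ℝ≥0∞) {ι : Type*} [Fintype ι] [DecidableEq ι]
    (K : Set (ι → ℝ)) : ℝ :=
  sInf {r : ℝ | ∃ A : Matrix ι ι ℝ,
    r = Real.sqrt (trp (p / 2) (A * Aᵀ)) ∧
    ∃ v : ι → ℝ, (fun x => x + v) '' K ⊆ (fun x => A.mulVec x) '' ball2 ι}

/-- The support function `h_K(θ) = sup_{x ∈ K} ⟨x, θ⟩`. -/
noncomputable def suppFn {ι : Type*} [Fintype ι] (K : Set (ι → ℝ)) (θ : ι → ℝ) : ℝ :=
  sSup ((fun x => ∑ i, x i * θ i) '' K)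

/-- The width function `w_K(θ) = sup_{x ∈ K} ⟨x, θ⟩ - inf_{x ∈ K} ⟨x, θ⟩`. -/
noncomputable def widthFn {ι : Type*} [Fintype ι] (K : Set (ι → ℝ)) (θ : ι → ℝ) : ℝ :=
  sSup ((fun x => ∑ i, x i * θ i) '' K) - sInf ((fun x => ∑ i, x i * θ i) '' K)

lemma sign_cancel {ι : Type*} [Fintype ι] [DecidableEq ι] {i k : ι} (hik : i ≠ k) :
    ∑ δ : ι → Bool, ((if δ i then (1:ℝ) else -1) * (if δ k then (1:ℝ) else -1)) = 0 := by
  set F : (ι → Bool) → ℝ := fun δ => (if δ i then (1:ℝ) else -1) * (if δ k then (1:ℝ) else -1)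
    with hF
  have inv : Function.Involutive (fun δ : ι → Bool => Function.update δ i (!(δ i))) := by
    intro δ; funext j; by_cases hj : j = i <;> simp [hj, Function.update]
  have key : ∀ δ, F (Function.update δ i (!(δ i))) = -F δ := by
    intro δ
    have h1 : (Function.update δ i (!(δ i))) i = !(δ i) := Function.update_self _ _ _
    have h2 : (Function.update δ i (!(δ i))) k = δ k := Function.update_of_ne (Ne.symm hik) _ _
    simp only [F, h1, h2]
    cases δ i <;> cases δ k <;> norm_num
  have h1 : ∑ δ : ι → Bool, F δ = ∑ δ : ι → Bool, -F δ :=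
    Fintype.sum_equiv inv.toPerm F (fun δ => -F δ) (fun δ => by
      simp only [Function.Involutive.coe_toPerm]; linarith [key δ])
  rw [Finset.sum_neg_distrib] at h1
  linarith

lemma sign_sum_sq {ι : Type*} [Fintype ι] [DecidableEq ι] (u : ι → ℝ) :
    ∑ δ : ι → Bool, (∑ i, (if δ i then (1:ℝ) else -1) * u i)^2
      = 2^(Fintype.card ι) * ∑ i, u i^2 := by
  have step1 : ∑ δ : ι → Bool, (∑ i, (if δ i then (1:ℝ) else -1) * u i)^2
      = ∑ δ : ι → Bool, ∑ i, ∑ k,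
        ((if δ i then (1:ℝ) else -1) * (if δ k then (1:ℝ) else -1)) * (u i * u k) := by
    refine Finset.sum_congr rfl fun δ _ => ?_
    rw [sq, Finset.sum_mul_sum]
    exact Finset.sum_congr rfl fun i _ => Finset.sum_congr rfl fun k _ => by ring
  rw [step1, Finset.sum_comm]
  have step2 : ∀ i : ι, ∑ δ : ι → Bool, ∑ k,
      ((if δ i then (1:ℝ) else -1) * (if δ k then (1:ℝ) else -1)) * (u i * u k)
      = 2^(Fintype.card ι) * u i ^2 := by
    intro i
    rw [Finset.sum_comm]
    rw [Finset.sum_eq_single i]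
    · have : ∀ δ : ι → Bool,
          ((if δ i then (1:ℝ) else -1) * (if δ i then (1:ℝ) else -1)) * (u i * u i)
          = u i ^ 2 := by intro δ; cases h : δ i <;> simp [h] <;> ring
      rw [Finset.sum_congr rfl (fun δ _ => this δ), Finset.sum_const, Finset.card_univ]
      simp [Fintype.card_fun, mul_comm]
    · intro k _ hk
      rw [← Finset.sum_mul, sign_cancel (Ne.symm hk), zero_mul]
    · intro h; exact absurd (Finset.mem_univ i) h
  rw [Finset.sum_congr rfl (fun i _ => step2 i), ← Finset.mul_sum]


lemma key_ineq {d : ℕ} (A : Matrix (Fin d) (Fin d) ℝ) (v : Fin d → ℝ)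
    (a b : Fin d → ℝ) (hab : ∀ i, a i ≤ b i)
    (hsub : (fun x => x + v) '' (Set.univ.pi fun i => Set.Icc (a i) (b i)) ⊆
      (fun x => A.mulVec x) '' ball2 (Fin d))
    (t : Fin d → ℝ) :
    (∑ i, ((b i - a i)/2) * t i)^2 ≤ ∑ i, t i^2 * (∑ j, A i j^2) := by
  classical
  set c : Fin d → ℝ := fun i => (b i - a i)/2 with hc
  have hvert : ∀ δ : Fin d → Bool, ∃ y : Fin d → ℝ, (∑ j, y j ^ 2 ≤ 1) ∧
      ∀ i, A.mulVec y i = (if δ i then (1:ℝ) else -1) * c i := by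
    intro δ
    have hx : ∀ (δ' : Fin d → Bool), (fun i => if δ' i then b i else a i) ∈
        (Set.univ.pi fun i => Set.Icc (a i) (b i)) := by
      intro δ' i _
      by_cases h : δ' i <;> simp [h, hab i, le_refl]
    obtain ⟨y1, hy1b, hy1⟩ := hsub ⟨_, hx δ, rfl⟩
    obtain ⟨y2, hy2b, hy2⟩ := hsub ⟨_, hx (fun i => !(δ i)), rfl⟩
    refine ⟨fun j => (y1 j - y2 j)/2, ?_, ?_⟩
    · have cs := Finset.sum_mul_sq_le_sq_mul_sq Finset.univ y1 y2
      have n1 : (0:ℝ) ≤ ∑ j, y1 j ^ 2 := by positivity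
      have n2 : (0:ℝ) ≤ ∑ j, y2 j ^ 2 := by positivity
      have expand : ∑ j, ((y1 j - y2 j)/2) ^ 2
          = (∑ j, y1 j ^ 2)/4 + (∑ j, y2 j ^ 2)/4 - (∑ j, y1 j * y2 j)/2 := by
        rw [Finset.sum_congr rfl (fun j (_ : j ∈ Finset.univ) =>
          (by ring : ((y1 j - y2 j)/2) ^ 2 = y1 j ^ 2/4 + y2 j ^ 2/4 - y1 j * y2 j/2)),
          Finset.sum_sub_distrib, Finset.sum_add_distrib,
          ← Finset.sum_div, ← Finset.sum_div, ← Finset.sum_div]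
      rw [expand]
      have hb1 : ∑ j, y1 j ^ 2 ≤ 1 := hy1b
      have hb2 : ∑ j, y2 j ^ 2 ≤ 1 := hy2b
      nlinarith [cs, hb1, hb2, n1, n2, sq_nonneg ((∑ j, y1 j * y2 j) + 1)]
    · intro i
      have e1 : A.mulVec y1 i = (if δ i then b i else a i) + v i := by
        have := congrFun hy1 i; simpa using this
      have e2 : A.mulVec y2 i = (if !(δ i) then b i else a i) + v i := by
        have := congrFun hy2 i; simpa using this
      have : A.mulVec (fun j => (y1 j - y2 j)/2) i = (A.mulVec y1 i - A.mulVec y2 i)/2 := by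
        simp only [Matrix.mulVec, dotProduct]
        rw [← Finset.sum_sub_distrib, Finset.sum_div]
        exact Finset.sum_congr rfl fun j _ => by ring
      rw [this, e1, e2]
      cases h : δ i <;> simp [h, hc] <;> ring
  choose y hyb hyA using hvert
  have per : ∀ δ : Fin d → Bool, (∑ i, c i * t i)^2
      ≤ ∑ j, (∑ i, (if δ i then (1:ℝ) else -1) * (t i * A i j))^2 := by
    intro δ
    have e1 : ∑ i, c i * t i
        = ∑ j, y δ j * (∑ i, (if δ i then (1:ℝ) else -1) * (t i * A i j)) := by
      calc ∑ i, c i * t i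
          = ∑ i, (A.mulVec (y δ) i) * ((if δ i then (1:ℝ) else -1) * t i) := by
            refine Finset.sum_congr rfl fun i _ => ?_
            rw [hyA δ i]
            cases h : δ i <;> simp [h] <;> ring
        _ = ∑ i, ∑ j, (A i j * y δ j) * ((if δ i then (1:ℝ) else -1) * t i) := by
            refine Finset.sum_congr rfl fun i _ => ?_
            simp only [Matrix.mulVec, dotProduct]
            rw [Finset.sum_mul]
        _ = ∑ j, y δ j * (∑ i, (if δ i then (1:ℝ) else -1) * (t i * A i j)) := by
            rw [Finset.sum_comm]
            refine Finset.sum_congr rfl fun j _ => ?_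
            rw [Finset.mul_sum]
            exact Finset.sum_congr rfl fun i _ => by ring
    rw [e1]
    have cs := Finset.sum_mul_sq_le_sq_mul_sq Finset.univ (y δ)
      (fun j => ∑ i, (if δ i then (1:ℝ) else -1) * (t i * A i j))
    have ng : (0:ℝ) ≤ ∑ j, (∑ i, (if δ i then (1:ℝ) else -1) * (t i * A i j))^2 := by
      positivity
    nlinarith [cs, hyb δ, ng]
  have sum_per := Finset.sum_le_sum (fun δ (_ : δ ∈ (Finset.univ : Finset (Fin d → Bool))) => per δ)
  rw [Finset.sum_const, Finset.card_univ] at sum_per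
  have rhs : ∑ δ : Fin d → Bool, ∑ j, (∑ i, (if δ i then (1:ℝ) else -1) * (t i * A i j))^2
      = 2^d * ∑ i, t i^2 * ∑ j, A i j^2 := by
    rw [Finset.sum_comm]
    rw [Finset.sum_congr rfl (fun j _ => sign_sum_sq (fun i => t i * A i j))]
    rw [← Finset.mul_sum, Fintype.card_fin]
    congr 1
    rw [Finset.sum_comm]
    refine Finset.sum_congr rfl fun i _ => ?_
    rw [Finset.mul_sum]
    exact Finset.sum_congr rfl fun j _ => by ring
  rw [rhs] at sum_per
  have hcard : (Fintype.card (Fin d → Bool)) = 2^d := by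
    simp [Fintype.card_fun]
  rw [hcard, nsmul_eq_mul] at sum_per
  have h2 : (0:ℝ) < 2^d := by positivity
  have : ((2:ℝ)^d) * (∑ i, c i * t i)^2 ≤ (2:ℝ)^d * (∑ i, t i^2 * ∑ j, A i j^2) := by
    
    convert sum_per using 2
    · rfl
    push_cast
    rfl
  exact le_of_mul_le_mul_left this h2


set_option maxHeartbeats 1000000 in
lemma Gamma_box_eq {d : ℕ} (p : ℝ≥0∞) (hp : 2 ≤ p) (a b : Fin d → ℝ)
    (hab : ∀ i, a i ≤ b i) :
    Gamma p (Set.univ.pi fun i => Set.Icc (a i) (b i)) =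
      (1 / 2) * pnorm (if p = ∞ then 2 else 2 * p / (p + 2)) (b - a) := by
  classical
  set c : Fin d → ℝ := fun i => (b i - a i)/2 with hcdef
  have hc : ∀ i, 0 ≤ c i := fun i => by
    have := hab i; simp only [hcdef]; linarith
  set K := Set.univ.pi fun i => Set.Icc (a i) (b i) with hK
  -- the midpoint
  set m : Fin d → ℝ := fun i => (a i + b i)/2 with hm
  have hmc1 : ∀ i, m i + c i = b i := fun i => by simp [hm, hcdef]; ring
  have hmc2 : ∀ i, m i - c i = a i := fun i => by simp [hm, hcdef]; ring
  by_cases hptop : p = ∞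
  · -- p = ∞
    subst hptop
    rw [if_pos rfl]
    set N2 := ∑ i, c i ^ 2 with hN2
    have hN20 : 0 ≤ N2 := Finset.sum_nonneg fun i _ => sq_nonneg _
    have htop2 : ((⊤:ℝ≥0∞) / 2) = ⊤ := ENNReal.top_div_of_ne_top (by norm_num)
    have target_eq : (1/2 : ℝ) * pnorm 2 (b - a) = Real.sqrt N2 := by
      rw [pnorm, if_neg (by norm_num : (2:ℝ≥0∞) ≠ ∞),
        show ((2:ℝ≥0∞)).toReal = 2 by norm_num]
      have habs : ∀ i, |(b - a) i| ^ (2:ℝ) = 4 * c i ^ 2 := by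
        intro i
        have hba : (b - a) i = 2 * c i := by simp [hcdef]; ring
        rw [hba, abs_of_nonneg (by linarith [hc i]),
          show ((2:ℝ)) = ((2:ℕ):ℝ) by norm_num, Real.rpow_natCast]
        ring
      rw [Finset.sum_congr rfl fun i _ => habs i, ← Finset.mul_sum, ← hN2,
        ← Real.sqrt_eq_rpow, Real.sqrt_mul (by norm_num : (0:ℝ) ≤ 4),
        show Real.sqrt 4 = 2 by
          rw [show (4:ℝ) = 2^2 by norm_num, Real.sqrt_sq (by norm_num : (0:ℝ) ≤ 2)]]
      ring
    rw [target_eq]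
    have hGamma : Gamma ⊤ K = sInf {r : ℝ | ∃ A : Matrix (Fin d) (Fin d) ℝ,
        r = Real.sqrt (trp ((⊤:ℝ≥0∞) / 2) (A * Aᵀ)) ∧
        ∃ v : Fin d → ℝ, (fun x => x + v) '' K ⊆ (fun x => A.mulVec x) '' ball2 (Fin d)} := rfl
    rw [hGamma]
    have hleast : IsLeast {r : ℝ | ∃ A : Matrix (Fin d) (Fin d) ℝ,
        r = Real.sqrt (trp ((⊤:ℝ≥0∞) / 2) (A * Aᵀ)) ∧
        ∃ v : Fin d → ℝ, (fun x => x + v) '' K ⊆ (fun x => A.mulVec x) '' ball2 (Fin d)}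
        (Real.sqrt N2) := by
      constructor
      · refine ⟨Matrix.diagonal (fun _ => Real.sqrt N2), ?_, ?_⟩
        · have hdiag : Matrix.diagonal (fun _ : Fin d => Real.sqrt N2) *
              (Matrix.diagonal (fun _ : Fin d => Real.sqrt N2))ᵀ
              = Matrix.diagonal (fun _ : Fin d => N2) := by
            rw [Matrix.diagonal_transpose, Matrix.diagonal_mul_diagonal]
            exact congrArg Matrix.diagonal (funext fun i => Real.mul_self_sqrt hN20)
          rw [hdiag, htop2]
          have htr : trp ⊤ (Matrix.diagonal (fun _ : Fin d => N2)) = ⨆ _ : Fin d, |N2| := by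
            rw [trp, pnorm, if_pos rfl]
            congr 1
            funext i
            rw [Matrix.diagonal_apply_eq]
          rw [htr]
          rcases isEmpty_or_nonempty (Fin d) with hd | hd
          · have h1 : (⨆ _ : Fin d, |N2|) = 0 := Real.iSup_of_isEmpty _
            have h2 : N2 = 0 := by
              rw [hN2, Finset.univ_eq_empty, Finset.sum_empty]
            rw [h1, h2]
          · rw [ciSup_const, abs_of_nonneg hN20]
        · refine ⟨fun i => -(m i), ?_⟩
          rintro _ ⟨x, hx, rfl⟩
          have hxm : ∀ i, |x i - m i| ≤ c i := by
            intro i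
            have h1 := (hx i (Set.mem_univ i)).1
            have h2 := (hx i (Set.mem_univ i)).2
            rw [abs_le]
            constructor
            · linarith [hmc2 i]
            · linarith [hmc1 i]
          by_cases hz : N2 = 0
          · have hall : ∀ i, c i = 0 := by
              intro i
              have h1 : c i ^2 ≤ N2 := Finset.single_le_sum
                (f := fun i => c i ^2) (fun i _ => sq_nonneg _) (Finset.mem_univ i)
              nlinarith [hc i]
            refine ⟨fun _ => 0, ?_, ?_⟩
            · show ∑ _ : Fin d, (0:ℝ)^2 ≤ 1
              simp
            · funext i
              show (Matrix.diagonal (fun _ : Fin d => Real.sqrt N2) *ᵥ _) i = x i + -(m i)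
              rw [Matrix.mulVec_diagonal, mul_zero]
              have h1 := hxm i
              rw [hall i] at h1
              have h2 : |x i - m i| = 0 := le_antisymm h1 (abs_nonneg _)
              have h3 := abs_eq_zero.mp h2
              linarith
          · have hN2pos : 0 < N2 := lt_of_le_of_ne hN20 (Ne.symm hz)
            refine ⟨fun i => (x i - m i)/Real.sqrt N2, ?_, ?_⟩
            · show ∑ i, ((x i - m i)/Real.sqrt N2)^2 ≤ 1
              have hterm : ∀ i, ((x i - m i)/Real.sqrt N2)^2 ≤ c i^2 / N2 := by
                intro i
                rw [div_pow, Real.sq_sqrt hN20]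
                refine (div_le_div_iff_of_pos_right hN2pos).mpr ?_
                nlinarith [hxm i, abs_nonneg (x i - m i), sq_abs (x i - m i),
                  le_abs_self (x i - m i)]
              calc ∑ i, ((x i - m i)/Real.sqrt N2)^2 ≤ ∑ i, c i^2/N2 :=
                    Finset.sum_le_sum fun i _ => hterm i
                _ = N2/N2 := by rw [← Finset.sum_div, ← hN2]
                _ ≤ 1 := div_self_le_one N2
            · funext i
              show (Matrix.diagonal (fun _ : Fin d => Real.sqrt N2) *ᵥ _) i = x i + -(m i)
              rw [Matrix.mulVec_diagonal,
                mul_div_cancel₀ _ (ne_of_gt (Real.sqrt_pos.mpr hN2pos))]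
              ring
      · rintro r ⟨A, rfl, v, hsub⟩
        have key : ∀ t : Fin d → ℝ, (∑ i, c i * t i)^2 ≤ ∑ i, t i^2 * (∑ j, A i j^2) :=
          fun t => key_ineq A v a b hab hsub t
        set D : Fin d → ℝ := fun i => ∑ j, A i j ^ 2 with hDdef
        have hD0 : ∀ i, 0 ≤ D i := fun i => Finset.sum_nonneg fun j _ => sq_nonneg _
        have htrp : trp ((⊤:ℝ≥0∞)/2) (A * Aᵀ) = ⨆ i, |(A * Aᵀ) i i| := by
          rw [htop2, trp, pnorm, if_pos rfl]
        by_cases hz : N2 = 0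
        · rw [hz, Real.sqrt_zero]
          exact Real.sqrt_nonneg _
        · have hN2pos : 0 < N2 := lt_of_le_of_ne hN20 (Ne.symm hz)
          have hd : Nonempty (Fin d) := by
            by_contra hne
            rw [not_nonempty_iff] at hne
            apply hz
            rw [hN2, Finset.univ_eq_empty, Finset.sum_empty]
          have entry : ∀ i, (A * Aᵀ) i i = D i := by
            intro i
            rw [Matrix.mul_apply]
            exact Finset.sum_congr rfl fun j _ => by rw [Matrix.transpose_apply, ← sq]
          have hT : ∀ i, D i ≤ ⨆ j, |(A * Aᵀ) j j| := by
            intro i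
            have h1 : D i ≤ |(A * Aᵀ) i i| := by rw [entry i]; exact le_abs_self _
            exact h1.trans (le_ciSup (f := fun j => |(A * Aᵀ) j j|) (Set.Finite.bddAbove (Set.finite_range _)) i)
          have hkey := key c
          have e0 : ∑ i, c i * c i = N2 := by
            rw [hN2]
            exact Finset.sum_congr rfl fun i _ => (sq (c i)).symm ▸ by ring
          have h1 : ∑ i, c i^2 * D i ≤ N2 * (⨆ j, |(A * Aᵀ) j j|) := by
            rw [hN2, Finset.sum_mul]
            exact Finset.sum_le_sum fun i _ => mul_le_mul_of_nonneg_left (hT i) (sq_nonneg _)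
          rw [e0] at hkey
          have h2 : N2^2 ≤ N2 * (⨆ j, |(A * Aᵀ) j j|) := le_trans hkey h1
          have h3 : N2 ≤ ⨆ j, |(A * Aᵀ) j j| := by nlinarith
          rw [htrp]
          exact Real.sqrt_le_sqrt h3
    exact hleast.csInf_eq
  · -- finite p
    set P := p.toReal with hPdef
    have hP2 : (2:ℝ) ≤ P := by
      have := ENNReal.toReal_mono hptop hp
      simpa using this
    have hP0 : (0:ℝ) < P := by linarith
    have hPp2 : P + 2 ≠ 0 := by positivity
    set Q := 2*P/(P+2) with hQdef
    have hQ0 : 0 < Q := by positivity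
    have hQlt2 : Q < 2 := by
      rw [hQdef, div_lt_iff₀ (by positivity)]; linarith
    have hQ1 : 1 ≤ Q := by
      rw [hQdef, le_div_iff₀ (by positivity)]; nlinarith
    set N := ∑ i, c i ^ Q with hN
    have hN0 : 0 ≤ N := Finset.sum_nonneg fun i _ => Real.rpow_nonneg (hc i) _
    -- toReal facts
    have hq_ne : (2 * p / (p + 2)) ≠ ∞ := by
      intro h
      rw [ENNReal.div_eq_top] at h
      rcases h with ⟨_, h2⟩ | ⟨h1, _⟩
      · simp [add_eq_zero] at h2
      · rw [ENNReal.mul_eq_top] at h1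
        rcases h1 with ⟨_, h⟩ | ⟨h, _⟩ <;> simp [hptop] at h
    have hq_toReal : (2 * p / (p + 2)).toReal = Q := by
      rw [ENNReal.toReal_div, ENNReal.toReal_mul, ENNReal.toReal_add hptop (by norm_num)]
      norm_num [hQdef, hPdef]
    have hp2_ne : p / 2 ≠ ∞ := by
      intro h
      rw [ENNReal.div_eq_top] at h
      rcases h with ⟨_, h2⟩ | ⟨h1, _⟩
      · norm_num at h2
      · exact hptop h1
    have hp2_toReal : (p / 2).toReal = P / 2 := by
      rw [ENNReal.toReal_div]; norm_num [hPdef]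
    -- the target value
    have target_eq : (1 / 2) * pnorm (if p = ∞ then 2 else 2 * p / (p + 2)) (b - a)
        = N ^ (1/Q) := by
      rw [if_neg hptop]
      rw [pnorm, if_neg hq_ne, hq_toReal]
      have habs : ∀ i, |(b - a) i| ^ Q = 2 ^ Q * c i ^ Q := by
        intro i
        have : (b - a) i = 2 * c i := by simp [hcdef]; ring
        rw [this, abs_of_nonneg (by linarith [hc i]), Real.mul_rpow (by norm_num) (hc i)]
      rw [Finset.sum_congr rfl fun i _ => habs i, ← Finset.mul_sum, ← hN,
        Real.mul_rpow (by positivity) hN0]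
      have h2Q : ((2:ℝ)^Q)^(1/Q) = 2 := by
        rw [← Real.rpow_mul (by norm_num : (0:ℝ) ≤ 2), mul_one_div_cancel (ne_of_gt hQ0),
          Real.rpow_one]
      rw [h2Q]; ring
    rw [target_eq]
    -- the set S
    have hGamma : Gamma p K = sInf {r : ℝ | ∃ A : Matrix (Fin d) (Fin d) ℝ,
        r = Real.sqrt (trp (p / 2) (A * Aᵀ)) ∧
        ∃ v : Fin d → ℝ, (fun x => x + v) '' K ⊆ (fun x => A.mulVec x) '' ball2 (Fin d)} := rfl
    rw [hGamma]
    have hleast : IsLeast {r : ℝ | ∃ A : Matrix (Fin d) (Fin d) ℝ,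
        r = Real.sqrt (trp (p / 2) (A * Aᵀ)) ∧
        ∃ v : Fin d → ℝ, (fun x => x + v) '' K ⊆ (fun x => A.mulVec x) '' ball2 (Fin d)}
        (N ^ (1/Q)) := by
      constructor
      · -- membership
        refine ⟨Matrix.diagonal (fun i => Real.sqrt (N * c i ^ ((4:ℝ)/(P+2)))), ?_, ?_⟩
        · have hD : ∀ i, 0 ≤ N * c i ^ ((4:ℝ)/(P+2)) := fun i => by
            exact mul_nonneg hN0 (Real.rpow_nonneg (hc i) _)
          have hdiag : Matrix.diagonal (fun i => Real.sqrt (N * c i ^ ((4:ℝ)/(P+2)))) *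
              (Matrix.diagonal (fun i => Real.sqrt (N * c i ^ ((4:ℝ)/(P+2)))))ᵀ
              = Matrix.diagonal (fun i => N * c i ^ ((4:ℝ)/(P+2))) := by
            rw [Matrix.diagonal_transpose, Matrix.diagonal_mul_diagonal]
            exact congrArg Matrix.diagonal (funext fun i => Real.mul_self_sqrt (hD i))
          rw [hdiag]
          have htr : trp (p/2) (Matrix.diagonal (fun i => N * c i ^ ((4:ℝ)/(P+2))))
              = N ^ ((2:ℝ)/Q) := by
            rw [trp, pnorm, if_neg hp2_ne, hp2_toReal]
            have hterm : ∀ i : Fin d,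
                |Matrix.diagonal (fun i => N * c i ^ ((4:ℝ)/(P+2))) i i| ^ (P/2)
                = N ^ (P/2) * c i ^ Q := by
              intro i
              rw [Matrix.diagonal_apply_eq, abs_of_nonneg (hD i),
                Real.mul_rpow hN0 (Real.rpow_nonneg (hc i) _),
                ← Real.rpow_mul (hc i)]
              have hexp : (4:ℝ)/(P+2) * (P/2) = Q := by
                rw [hQdef]; field_simp; ring
              rw [hexp]
            rw [Finset.sum_congr rfl fun i _ => hterm i, ← Finset.mul_sum, ← hN]
            have hNN : N ^ (P/2) * N = N ^ (P/2 + 1) := by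
              rw [Real.rpow_add' hN0 (by positivity), Real.rpow_one]
            rw [hNN, ← Real.rpow_mul hN0]
            have hexp2 : (P/2 + 1) * (1/(P/2)) = 2/Q := by
              rw [hQdef]; field_simp
            rw [hexp2]
          rw [htr, Real.sqrt_eq_rpow, ← Real.rpow_mul hN0]
          congr 1
          ring
        · refine ⟨fun i => -(m i), ?_⟩
          rintro _ ⟨x, hx, rfl⟩
          have hxm : ∀ i, |x i - m i| ≤ c i := by
            intro i
            have h1 := (hx i (Set.mem_univ i)).1
            have h2 := (hx i (Set.mem_univ i)).2
            rw [abs_le]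
            constructor
            · linarith [hmc2 i]
            · linarith [hmc1 i]
          refine ⟨fun i => if c i = 0 then 0
            else (x i - m i)/Real.sqrt (N * c i ^ ((4:ℝ)/(P+2))), ?_, ?_⟩
          · show ∑ i, (if c i = 0 then (0:ℝ)
              else (x i - m i)/Real.sqrt (N * c i ^ ((4:ℝ)/(P+2)))) ^ 2 ≤ 1
            have hterm : ∀ i, (if c i = 0 then (0:ℝ)
                else (x i - m i)/Real.sqrt (N * c i ^ ((4:ℝ)/(P+2)))) ^ 2 ≤ c i ^ Q / N := by
              intro i
              by_cases h : c i = 0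
              · rw [if_pos h]
                norm_num
                exact div_nonneg (Real.rpow_nonneg (hc i) _) hN0
              · have hci : 0 < c i := lt_of_le_of_ne (hc i) (Ne.symm h)
                have hNpos : 0 < N := lt_of_lt_of_le (Real.rpow_pos_of_pos hci Q)
                  (Finset.single_le_sum (f := fun i => c i ^ Q)
                    (fun i _ => Real.rpow_nonneg (hc i) _) (Finset.mem_univ i))
                have hDpos : (0:ℝ) < N * c i ^ ((4:ℝ)/(P+2)) := by
                  exact mul_pos hNpos (Real.rpow_pos_of_pos hci _)
                rw [if_neg h, div_pow, Real.sq_sqrt (le_of_lt hDpos)]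
                have hnum : (x i - m i)^2 ≤ c i ^2 := by
                  nlinarith [hxm i, abs_nonneg (x i - m i), sq_abs (x i - m i),
                    neg_abs_le (x i - m i), le_abs_self (x i - m i)]
                have hratio : c i ^ (2:ℕ) / (N * c i ^ ((4:ℝ)/(P+2))) = c i ^ Q / N := by
                  have hc2 : (c i : ℝ) ^ (2:ℕ) = c i ^ ((2:ℕ):ℝ) := (Real.rpow_natCast _ _).symm
                  have hcd : c i ^ Q = c i ^ ((2:ℕ):ℝ) / c i ^ ((4:ℝ)/(P+2)) := by
                    rw [← Real.rpow_sub hci]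
                    congr 1
                    push_cast
                    rw [hQdef]; field_simp; ring
                  rw [hc2, hcd, div_div, mul_comm N]
                calc (x i - m i)^2 / (N * c i ^ ((4:ℝ)/(P+2)))
                    ≤ c i ^2 / (N * c i ^ ((4:ℝ)/(P+2))) := by
                      exact (div_le_div_iff_of_pos_right hDpos).mpr hnum
                  _ = c i ^ Q / N := hratio
            calc ∑ i, (if c i = 0 then (0:ℝ)
                else (x i - m i)/Real.sqrt (N * c i ^ ((4:ℝ)/(P+2)))) ^ 2
                ≤ ∑ i, c i ^ Q / N := Finset.sum_le_sum fun i _ => hterm i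
              _ = N / N := by rw [← Finset.sum_div, ← hN]
              _ ≤ 1 := div_self_le_one N
          · funext i
            show (Matrix.diagonal (fun i => Real.sqrt (N * c i ^ ((4:ℝ)/(P+2)))) *ᵥ _) i
              = x i + -(m i)
            rw [Matrix.mulVec_diagonal]
            by_cases h : c i = 0
            · rw [if_pos h]
              have : x i = m i := by
                have := hxm i
                rw [h] at this
                have h2 := abs_nonneg (x i - m i)
                have : |x i - m i| = 0 := le_antisymm this h2
                have := abs_eq_zero.mp this
                linarith
              rw [this]; ring
            · have hci : 0 < c i := lt_of_le_of_ne (hc i) (Ne.symm h)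
              have hNpos : 0 < N := lt_of_lt_of_le (Real.rpow_pos_of_pos hci Q)
                (Finset.single_le_sum (f := fun i => c i ^ Q)
                  (fun i _ => Real.rpow_nonneg (hc i) _) (Finset.mem_univ i))
              have hDpos : (0:ℝ) < N * c i ^ ((4:ℝ)/(P+2)) :=
                mul_pos hNpos (Real.rpow_pos_of_pos hci _)
              rw [if_neg h, mul_div_cancel₀ _ (ne_of_gt (Real.sqrt_pos.mpr hDpos))]
              ring
      · rintro r ⟨A, rfl, v, hsub⟩
        have key : ∀ t : Fin d → ℝ, (∑ i, c i * t i)^2 ≤ ∑ i, t i^2 * (∑ j, A i j^2) :=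
          fun t => key_ineq A v a b hab hsub t
        set D : Fin d → ℝ := fun i => ∑ j, A i j ^ 2 with hDdef
        have hD0 : ∀ i, 0 ≤ D i := fun i => Finset.sum_nonneg fun j _ => sq_nonneg _
        have hzero : ∀ i, D i = 0 → c i = 0 := by
          intro i hDi
          have h := key (Pi.single i 1 : Fin d → ℝ)
          have e1 : ∑ j, c j * (Pi.single i 1 : Fin d → ℝ) j = c i := by
            simp [Pi.single_apply, mul_ite]
          have e2 : ∑ j, ((Pi.single i 1 : Fin d → ℝ) j)^2 * (∑ k, A j k ^2) = D i := by
            simp [Pi.single_apply, ite_pow, ite_mul, hDdef]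
          rw [e1, e2, hDi] at h
          nlinarith [hc i]
        set ρ : Fin d → ℝ := fun i => if D i = 0 then 0 else c i^2 / D i with hρdef
        have hρ0 : ∀ i, 0 ≤ ρ i := by
          intro i
          by_cases h : D i = 0
          · simp [hρdef, h]
          · simp only [hρdef, if_neg h]
            exact div_nonneg (sq_nonneg _) (hD0 i)
        have hS0 : 0 ≤ ∑ i, ρ i := Finset.sum_nonneg fun i _ => hρ0 i
        have hS1 : ∑ i, ρ i ≤ 1 := by
          have h := key (fun i => if D i = 0 then 0 else c i / D i)
          have e1 : ∑ i, c i * (if D i = 0 then 0 else c i / D i) = ∑ i, ρ i := by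
            refine Finset.sum_congr rfl fun i _ => ?_
            by_cases h : D i = 0
            · simp [hρdef, h]
            · rw [if_neg h]
              simp only [hρdef, if_neg h]
              ring
          have e2 : ∑ i, (if D i = 0 then (0:ℝ) else c i / D i)^2 * (∑ k, A i k^2)
              = ∑ i, ρ i := by
            refine Finset.sum_congr rfl fun i _ => ?_
            have hAD : (∑ k, A i k ^2) = D i := rfl
            by_cases h : D i = 0
            · simp [hρdef, h, hAD]
            · rw [if_neg h]
              simp only [hρdef, if_neg h, hAD]
              have hDne : D i ≠ 0 := h
              field_simp
          rw [e1, e2] at h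
          nlinarith
        set M := ∑ i, D i ^ (P/2) with hM
        have hM0 : 0 ≤ M := Finset.sum_nonneg fun i _ => Real.rpow_nonneg (hD0 i) _
        have h2Q : (0:ℝ) < 2 - Q := by linarith
        have hconj : Real.HolderConjugate (2/Q) (2/(2-Q)) := by
          rw [Real.holderConjugate_iff]
          constructor
          · rw [lt_div_iff₀ hQ0]; linarith
          · rw [inv_div, inv_div]; ring
        have holder := Real.inner_le_Lp_mul_Lq Finset.univ
          (fun i => ρ i ^ (Q/2)) (fun i => D i ^ (Q/2)) hconj
        have lhs_eq : ∑ i, ρ i ^ (Q/2) * D i ^ (Q/2) = N := by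
          rw [hN]
          refine Finset.sum_congr rfl fun i _ => ?_
          by_cases h : D i = 0
          · have hρi : ρ i = 0 := by rw [hρdef]; simp [h]
            rw [hzero i h, hρi, Real.zero_rpow (by positivity : Q/2 ≠ 0), zero_mul,
              Real.zero_rpow (ne_of_gt hQ0)]
          · have hDpos : 0 < D i := lt_of_le_of_ne (hD0 i) (Ne.symm h)
            simp only [hρdef, if_neg h]
            rw [Real.div_rpow (sq_nonneg _) (hD0 i), div_mul_cancel₀]
            · rw [← Real.rpow_natCast (c i) 2, ← Real.rpow_mul (hc i),
                show ((2:ℕ):ℝ) * (Q/2) = Q by push_cast; ring]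
            · exact ne_of_gt (Real.rpow_pos_of_pos hDpos _)
        have f1 : (∑ i, |ρ i ^ (Q/2)| ^ (2/Q)) ^ (1/(2/Q)) ≤ 1 := by
          have habs : ∀ i, |ρ i ^ (Q/2)| ^ (2/Q) = ρ i := by
            intro i
            rw [abs_of_nonneg (Real.rpow_nonneg (hρ0 i) _), ← Real.rpow_mul (hρ0 i),
              show Q/2 * (2/Q) = 1 by field_simp, Real.rpow_one]
          rw [Finset.sum_congr rfl fun i _ => habs i]
          exact Real.rpow_le_one hS0 hS1 (by positivity)
        have f2 : (∑ i, |D i ^ (Q/2)| ^ (2/(2-Q))) ^ (1/(2/(2-Q))) = M ^ ((2-Q)/2) := by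
          have habs : ∀ i, |D i ^ (Q/2)| ^ (2/(2-Q)) = D i ^ (P/2) := by
            intro i
            rw [abs_of_nonneg (Real.rpow_nonneg (hD0 i) _), ← Real.rpow_mul (hD0 i)]
            have hexp : Q/2 * (2/(2-Q)) = P/2 := by
              rw [hQdef]
              rw [show (2:ℝ) - 2*P/(P+2) = 4/(P+2) by field_simp; ring]
              field_simp
              ring
            rw [hexp]
          rw [Finset.sum_congr rfl fun i _ => habs i, ← hM, one_div_div]
        rw [lhs_eq] at holder
        have hNM : N ≤ M ^ ((2-Q)/2) := by
          calc N ≤ _ := holder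
            _ ≤ 1 * M^((2-Q)/2) := by
                rw [f2]
                exact mul_le_mul_of_nonneg_right f1 (Real.rpow_nonneg hM0 _)
            _ = M^((2-Q)/2) := one_mul _
        have entry : ∀ i, (A * Aᵀ) i i = D i := by
          intro i
          rw [Matrix.mul_apply]
          exact Finset.sum_congr rfl fun j _ => by rw [Matrix.transpose_apply, ← sq]
        have htrp : trp (p/2) (A * Aᵀ) = M ^ ((2:ℝ)/P) := by
          rw [trp, pnorm, if_neg hp2_ne, hp2_toReal]
          have habs : ∀ i : Fin d, |(A * Aᵀ) i i| ^ (P/2) = D i ^ (P/2) := by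
            intro i
            rw [entry i, abs_of_nonneg (hD0 i)]
          rw [Finset.sum_congr rfl fun i _ => habs i, ← hM, one_div_div]
        rw [htrp, Real.sqrt_eq_rpow, ← Real.rpow_mul hM0,
          show (2:ℝ)/P * (1/2) = 1/P by ring]
        calc N ^ ((1:ℝ)/Q) ≤ (M^((2-Q)/2))^((1:ℝ)/Q) :=
              Real.rpow_le_rpow hN0 hNM (by positivity)
          _ = M ^ ((1:ℝ)/P) := by
              rw [← Real.rpow_mul hM0]
              congr 1
              rw [hQdef]
              rw [show (2:ℝ) - 2*P/(P+2) = 4/(P+2) by field_simp; ring]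
              field_simp
              ring
    exact hleast.csInf_eq

/-- `Γ_p` of a box equals `(1/2)·‖b - a‖_q` with `q = 2p/(p+2)`
for `p ∈ [2,∞)` and `q = 2` for `p = ∞`; in particular
`Γ_p([a,b]^d) = d^{1/2 + 1/p}(b-a)/2` for `p ∈ [2,∞)`. -/
theorem Gamma_box {d : ℕ} (p : ℝ≥0∞) (hp : 2 ≤ p) (a b : Fin d → ℝ)
    (hab : ∀ i, a i ≤ b i) :
    Gamma p (Set.univ.pi fun i => Set.Icc (a i) (b i)) =
      (1 / 2) * pnorm (if p = ∞ then 2 else 2 * p / (p + 2)) (b - a) ∧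
    (∀ c e : ℝ, c ≤ e → p ≠ ∞ →
      Gamma p (Set.univ.pi fun _ : Fin d => Set.Icc c e) =
        (d : ℝ) ^ ((1 : ℝ) / 2 + 1 / p.toReal) * (e - c) / 2) := by
  refine ⟨Gamma_box_eq p hp a b hab, ?_⟩
  intro c e hce hptop
  have h1 := Gamma_box_eq (d := d) p hp (fun _ => c) (fun _ => e) (fun _ => hce)
  rw [if_neg hptop] at h1
  rw [h1]
  set P := p.toReal with hPdef
  have hP2 : (2:ℝ) ≤ P := by simpa using ENNReal.toReal_mono hptop hp
  have hP0 : (0:ℝ) < P := by linarith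
  set Q := 2*P/(P+2) with hQdef
  have hQ0 : 0 < Q := by positivity
  have hq_ne : (2 * p / (p + 2)) ≠ ∞ := by
    intro h
    rw [ENNReal.div_eq_top] at h
    rcases h with ⟨_, h2⟩ | ⟨h1, _⟩
    · simp [add_eq_zero] at h2
    · rw [ENNReal.mul_eq_top] at h1
      rcases h1 with ⟨_, h⟩ | ⟨h, _⟩ <;> simp [hptop] at h
  have hq_toReal : (2 * p / (p + 2)).toReal = Q := by
    rw [ENNReal.toReal_div, ENNReal.toReal_mul, ENNReal.toReal_add hptop (by norm_num)]
    norm_num [hQdef, hPdef]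
  rw [pnorm, if_neg hq_ne, hq_toReal]
  have hec : (0:ℝ) ≤ e - c := sub_nonneg.mpr hce
  have habs : ∀ i : Fin d, |(((fun _ => e) : Fin d → ℝ) - ((fun _ => c) : Fin d → ℝ)) i| ^ Q
      = (e - c)^Q := by
    intro i
    rw [Pi.sub_apply, abs_of_nonneg hec]
  rw [Finset.sum_congr rfl fun i _ => habs i, Finset.sum_const, Finset.card_univ,
    Fintype.card_fin, nsmul_eq_mul,
    Real.mul_rpow (Nat.cast_nonneg d) (Real.rpow_nonneg hec _),
    ← Real.rpow_mul hec, mul_one_div_cancel (ne_of_gt hQ0), Real.rpow_one]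
  have hexp : 1/Q = 1/2 + 1/P := by
    rw [hQdef, one_div_div]
    field_simp
  rw [hexp]
  ring
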